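/- Let X be a compact metric space and r : X → X continuous, surjective, finite-to-one. Assume W is a continuous nonnegative function with R_W 1 = 1 which satisfies the TZ condition. Let h ∈ C(X) be nonnegative with R_W h = h. Then either there exists some x ∈ X such that h vanishes identically on the backward orbit O⁻(x) = ⋃_{n≥1} r⁻ⁿ(x), or every zero of h is a point lying on some W-cycle. -/

import Mathlib

open MeasureTheory Filter Topology

/-- The Ruelle transfer operator `R_W f (x) = ∑_{y ∈ r⁻¹(x)} W(y) f(y)`. -/
noncomputable def RuelleOp {X : Type*} (r : X → X) (W : X → ℝ) (f : X → ℝ) (x : X) : ℝ :=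
  ∑ᶠ y ∈ r ⁻¹' {x}, W y * f y

/-- `x` lies on a cycle of `r`. -/
def OnCycle {X : Type*} (r : X → X) (x : X) : Prop :=
  ∃ n : ℕ, 0 < n ∧ r^[n] x = x

/-- `C` is an `n`-cycle for `r` (for some `n ≥ 1`, the minimal period):
`C = {x, r x, …, r^[n-1] x}` with `r^[n] x = x`. -/
def IsCycle {X : Type*} (r : X → X) (C : Set X) : Prop :=
  ∃ (x : X) (n : ℕ), 0 < n ∧ r^[n] x = x ∧
    (∀ m : ℕ, 0 < m → r^[m] x = x → n ≤ m) ∧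
    C = (fun k => r^[k] x) '' Set.Iio n

/-- A `W`-cycle: a cycle on which `W` is identically `1`. -/
def IsWCycle {X : Type*} (r : X → X) (W : X → ℝ) (C : Set X) : Prop :=
  IsCycle r C ∧ ∀ y ∈ C, W y = 1

/-- The transversality-of-zeroes (TZ) condition. -/
def TZCondition {X : Type*} (r : X → X) (W : X → ℝ) : Prop :=
  (∀ x : X, ¬OnCycle r x →
    ∃ nx : ℕ, ∀ n ≥ nx, ∀ y : X, r^[n] y = x → W y ≠ 0) ∧
  (∀ x₀ x₁ : X, OnCycle r x₀ → OnCycle r x₁ → r x₁ = x₀ →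
    ∀ y : X, r y = x₀ → y ≠ x₁ → ¬OnCycle r y ∨ W y = 0)

section Aux

variable {X : Type*} {r : X → X} {W h : X → ℝ}

lemma aux_onCycle_iterate {x : X} (hx : OnCycle r x) (k : ℕ) : OnCycle r (r^[k] x) := by
  obtain ⟨n, hn, hfix⟩ := hx
  refine ⟨n, hn, ?_⟩
  rw [← Function.iterate_add_apply, add_comm, Function.iterate_add_apply, hfix]

/-- Each term in the Ruelle sum at a zero of `h` vanishes. -/
lemma aux_term_zero (hr_fin : ∀ x : X, (r ⁻¹' {x}).Finite)
    (hW_nonneg : ∀ x, 0 ≤ W x) (hh_nonneg : ∀ x, 0 ≤ h x)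
    (hh_harm : ∀ x, RuelleOp r W h x = h x)
    {x : X} (hx : h x = 0) {y : X} (hy : r y = x) : W y * h y = 0 := by
  have hharm := hh_harm x
  rw [RuelleOp, finsum_mem_eq_finite_toFinset_sum _ (hr_fin x), hx] at hharm
  have hmem : y ∈ (hr_fin x).toFinset := by
    rw [Set.Finite.mem_toFinset]; exact hy
  refine (Finset.sum_eq_zero_iff_of_nonneg ?_).mp hharm y hmem
  intro i _
  exact mul_nonneg (hW_nonneg i) (hh_nonneg i)

/-- There is always a preimage with nonzero weight. -/
lemma aux_exists_preimage (hr_fin : ∀ x : X, (r ⁻¹' {x}).Finite)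
    (hW1 : ∀ x : X, (∑ᶠ y ∈ r ⁻¹' {x}, W y) = 1) (x : X) :
    ∃ y : X, r y = x ∧ W y ≠ 0 := by
  by_contra hc
  push_neg at hc
  have h1 := hW1 x
  rw [finsum_mem_eq_finite_toFinset_sum _ (hr_fin x)] at h1
  have h0 : ∑ y ∈ (hr_fin x).toFinset, W y = 0 := by
    refine Finset.sum_eq_zero fun y hy => ?_
    rw [Set.Finite.mem_toFinset] at hy
    exact hc y hy
  rw [h0] at h1
  exact one_ne_zero h1.symm

/-- Zeroes of `h` propagate backwards along chains with nonvanishing weights. -/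
lemma aux_propagate (hr_fin : ∀ x : X, (r ⁻¹' {x}).Finite)
    (hW_nonneg : ∀ x, 0 ≤ W x) (hh_nonneg : ∀ x, 0 ≤ h x)
    (hh_harm : ∀ x, RuelleOp r W h x = h x) :
    ∀ (n : ℕ) (x y : X), h x = 0 → r^[n] y = x → (∀ k < n, W (r^[k] y) ≠ 0) → h y = 0 := by
  intro n
  induction n with
  | zero => intro x y hx hy _; simpa [← hy] using hx
  | succ n ih =>
    intro x y hx hy hW
    have hry : r^[n] (r y) = x := by rwa [← Function.iterate_succ_apply]
    have hry0 : h (r y) = 0 := by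
      refine ih x (r y) hx hry fun k hk => ?_
      have := hW (k + 1) (by omega)
      rwa [Function.iterate_succ_apply] at this
    have hterm := aux_term_zero hr_fin hW_nonneg hh_nonneg hh_harm hry0 (rfl : r y = r y)
    have hW0 : W y ≠ 0 := hW 0 (by omega)
    rcases mul_eq_zero.mp hterm with hc | hc
    · exact absurd hc hW0
    · exact hc

/-- Step 1: if the first alternative fails, every zero of `h` lies on a cycle. -/
lemma aux_step1 (hr_fin : ∀ x : X, (r ⁻¹' {x}).Finite)
    (hW_nonneg : ∀ x, 0 ≤ W x)
    (hW1 : ∀ x : X, (∑ᶠ y ∈ r ⁻¹' {x}, W y) = 1)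
    (hTZ1 : ∀ x : X, ¬OnCycle r x → ∃ nx : ℕ, ∀ n ≥ nx, ∀ y : X, r^[n] y = x → W y ≠ 0)
    (hh_nonneg : ∀ x, 0 ≤ h x)
    (hh_harm : ∀ x, RuelleOp r W h x = h x)
    (Hfail : ∀ x : X, ∃ y : X, (∃ n : ℕ, 0 < n ∧ r^[n] y = x) ∧ h y ≠ 0)
    {x₀ : X} (hx₀ : h x₀ = 0) : OnCycle r x₀ := by
  by_contra hnc
  obtain ⟨N, hN⟩ := hTZ1 x₀ hnc
  -- choose for each point a preimage with nonzero weight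
  choose f hf1 hf2 using aux_exists_preimage hr_fin hW1
  -- the chain z k = f^[k] x₀
  set z : ℕ → X := fun k => f^[k] x₀ with hz
  have hrz : ∀ i nn, i ≤ nn → r^[i] (z nn) = z (nn - i) := by
    intro i
    induction i with
    | zero => intro nn _; simp
    | succ i ih =>
      intro nn hin
      have h1 : r^[i + 1] (z nn) = r (r^[i] (z nn)) := Function.iterate_succ_apply' r i (z nn)
      rw [h1, ih nn (by omega)]
      have h2 : nn - i = (nn - (i + 1)) + 1 := by omega
      rw [h2]
      show r (f^[nn - (i+1) + 1] x₀) = f^[nn - (i+1)] x₀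
      rw [Function.iterate_succ_apply', hf1]
  have hWz : ∀ k, 0 < k → W (z k) ≠ 0 := by
    intro k hk
    have h2 : z k = f (f^[k - 1] x₀) := by
      show f^[k] x₀ = _
      have hk1 : k = (k - 1) + 1 := by omega
      conv_lhs => rw [hk1]
      rw [Function.iterate_succ_apply']
    rw [h2]
    exact hf2 _
  obtain ⟨y, ⟨n', hn'pos, hyz⟩, hy⟩ := Hfail (z N)
  have hyx₀ : r^[N + n'] y = x₀ := by
    rw [Function.iterate_add_apply, hyz]
    have := hrz N N le_rfl
    simpa [hz] using this
  -- there must be a weight zero along the chain from y to x₀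
  have hWzero : ∃ j < N + n', W (r^[j] y) = 0 := by
    by_contra hc
    push_neg at hc
    exact hy (aux_propagate hr_fin hW_nonneg hh_nonneg hh_harm (N + n') x₀ y hx₀ hyx₀
      fun k hk => hc k hk)
  obtain ⟨j, hj, hWj⟩ := hWzero
  by_cases hjn : j ≤ n'
  · -- deep zero: contradicts TZ(i)
    have hd : r^[(N + n' - j)] (r^[j] y) = x₀ := by
      rw [← Function.iterate_add_apply]
      have : N + n' - j + j = N + n' := by omega
      rw [this, hyx₀]
    exact hN (N + n' - j) (by omega) (r^[j] y) hd hWj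
  · -- shallow zero: on the chosen chain, contradiction with hWz
    push_neg at hjn
    have h1 : r^[j] y = r^[j - n'] (z N) := by
      rw [← hyz, ← Function.iterate_add_apply]
      congr 1
      omega
    rw [h1, hrz (j - n') N (by omega)] at hWj
    exact hWz (N - (j - n')) (by omega) hWj

/-- Step 2 key lemma: around a cycle, zeroes propagate and force weight 1. -/
lemma aux_lemA (hr_fin : ∀ x : X, (r ⁻¹' {x}).Finite)
    (hW_nonneg : ∀ x, 0 ≤ W x)
    (hW1 : ∀ x : X, (∑ᶠ y ∈ r ⁻¹' {x}, W y) = 1)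
    (hTZ : TZCondition r W)
    (hh_nonneg : ∀ x, 0 ≤ h x)
    (hh_harm : ∀ x, RuelleOp r W h x = h x)
    (Hfail : ∀ x : X, ∃ y : X, (∃ n : ℕ, 0 < n ∧ r^[n] y = x) ∧ h y ≠ 0)
    {c c' : X} (hc : h c = 0) (hcyc : OnCycle r c) (hcyc' : OnCycle r c')
    (hrc' : r c' = c) : W c' = 1 ∧ h c' = 0 := by
  have hvanish : ∀ y : X, r y = c → y ≠ c' → W y = 0 := by
    intro y hyc hyne
    by_contra hWy
    have hterm := aux_term_zero hr_fin hW_nonneg hh_nonneg hh_harm hc hyc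
    have hhy : h y = 0 := by
      rcases mul_eq_zero.mp hterm with hc0 | hc0
      · exact absurd hc0 hWy
      · exact hc0
    have hyOn : OnCycle r y :=
      aux_step1 hr_fin hW_nonneg hW1 hTZ.1 hh_nonneg hh_harm Hfail hhy
    rcases hTZ.2 c c' hcyc hcyc' hrc' y hyc hyne with hcase | hcase
    · exact hcase hyOn
    · exact hWy hcase
  have hsum := hW1 c
  rw [finsum_mem_eq_finite_toFinset_sum _ (hr_fin c)] at hsum
  have hmem : c' ∈ (hr_fin c).toFinset := by rw [Set.Finite.mem_toFinset]; exact hrc'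
  have hW1' : W c' = 1 := by
    rw [← hsum]
    refine (Finset.sum_eq_single_of_mem c' hmem ?_).symm
    intro b hb hbne
    rw [Set.Finite.mem_toFinset] at hb
    exact hvanish b hb hbne
  refine ⟨hW1', ?_⟩
  have hterm := aux_term_zero hr_fin hW_nonneg hh_nonneg hh_harm hc hrc'
  rw [hW1', one_mul] at hterm
  exact hterm

end Aux

theorem stmt8
    {X : Type*} [MetricSpace X] [CompactSpace X] [MeasurableSpace X] [BorelSpace X]
    (r : X → X) (hr_cont : Continuous r) (hr_surj : Function.Surjective r)
    (hr_fin : ∀ x : X, (r ⁻¹' {x}).Finite)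
    (W : X → ℝ) (hW_cont : Continuous W) (hW_nonneg : ∀ x, 0 ≤ W x)
    (hW1 : ∀ x : X, (∑ᶠ y ∈ r ⁻¹' {x}, W y) = 1)
    (hTZ : TZCondition r W)
    (h : X → ℝ) (hh_cont : Continuous h) (hh_nonneg : ∀ x, 0 ≤ h x)
    (hh_harm : ∀ x, RuelleOp r W h x = h x) :
    -- either `h` vanishes identically on a backward orbit `O⁻(x)`,
    (∃ x : X, ∀ y : X, (∃ n : ℕ, 0 < n ∧ r^[n] y = x) → h y = 0) ∨
    -- or every zero of `h` lies on some `W`-cycle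
    (∀ x : X, h x = 0 → ∃ C : Set X, IsWCycle r W C ∧ x ∈ C) := by
  by_cases hD1 : ∃ x : X, ∀ y : X, (∃ n : ℕ, 0 < n ∧ r^[n] y = x) → h y = 0
  · exact Or.inl hD1
  · right
    push_neg at hD1
    have Hfail : ∀ x : X, ∃ y : X, (∃ n : ℕ, 0 < n ∧ r^[n] y = x) ∧ h y ≠ 0 := hD1
    intro x hx
    have hxOn : OnCycle r x :=
      aux_step1 hr_fin hW_nonneg hW1 hTZ.1 hh_nonneg hh_harm Hfail hx
    -- minimal period
    have Hex : ∃ m : ℕ, 0 < m ∧ r^[m] x = x := hxOn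
    classical
    set p : ℕ := Nat.find Hex with hpdef
    have hp : 0 < p ∧ r^[p] x = x := Nat.find_spec Hex
    have hpmin : ∀ m : ℕ, 0 < m → r^[m] x = x → p ≤ m := by
      intro m hm hrm
      exact Nat.find_min' Hex ⟨hm, hrm⟩
    -- main induction around the cycle
    have aux : ∀ j, j ≤ p → h (r^[p - j] x) = 0 ∧ (0 < j → W (r^[p - j] x) = 1) := by
      intro j
      induction j with
      | zero =>
        intro _
        constructor
        · rw [Nat.sub_zero, hp.2]; exact hx
        · intro hc; omega
      | succ j ih =>
        intro hj
        have hj' : j ≤ p := by omega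
        have hstep : r (r^[p - (j + 1)] x) = r^[p - j] x := by
          have heq : p - j = (p - (j + 1)) + 1 := by omega
          rw [heq, Function.iterate_succ_apply']
        have hcycx : OnCycle r x := ⟨p, hp.1, hp.2⟩
        obtain ⟨hW', hh'⟩ := aux_lemA hr_fin hW_nonneg hW1 hTZ hh_nonneg hh_harm Hfail
          (ih hj').1 (aux_onCycle_iterate hcycx (p - j)) (aux_onCycle_iterate hcycx (p - (j + 1)))
          hstep
        exact ⟨hh', fun _ => hW'⟩
    refine ⟨(fun k => r^[k] x) '' Set.Iio p,
      ⟨⟨x, p, hp.1, hp.2, hpmin, rfl⟩, ?_⟩, ⟨0, by simpa using hp.1, by simp⟩⟩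
    rintro y ⟨k, hk, rfl⟩
    simp only [Set.mem_Iio] at hk
    have haux := aux (p - k) (by omega)
    have hkk : p - (p - k) = k := by omega
    rw [hkk] at haux
    exact haux.2 (by omega)
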